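/- Let α be irrational with convergents p_n/q_n, z_n = q_nα − p_n, and b_n = (|z_n| + |z_{n+1}|)/2. Let T : ℝ/ℤ → ℝ/ℤ be the translation Tx = x + α, and let I ⊂ ℝ/ℤ be the arc [−b_n, b_n) (mod 1). Then for every x ∈ ℝ/ℤ there exists an integer j with 0 ≤ j < q_{n+1} such that T^j x ∈ I; i.e., min{j ∈ ℕ : T^j x ∈ I} < q_{n+1}. -/

import Mathlib

/-- Gauss map iterates of `α`: `x₀ = {α}`, `x_{n+1} = {1/x_n}`. -/
noncomputable def gaussIter (α : ℝ) : ℕ → ℝ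
  | 0 => Int.fract α
  | n + 1 => Int.fract (gaussIter α n)⁻¹

/-- `cfa α n` is the partial quotient `a_{n+1} = ⌊1/x_n⌋` of the continued fraction of `α`. -/
noncomputable def cfa (α : ℝ) (n : ℕ) : ℕ := ⌊(gaussIter α n)⁻¹⌋₊

/-- Denominators `q_n` of the continued fraction convergents of `α`:
`q₀ = 1`, `q₁ = a₁`, `q_{n+2} = a_{n+2} q_{n+1} + q_n`. -/
noncomputable def cfq (α : ℝ) : ℕ → ℕ
  | 0 => 1
  | 1 => cfa α 0
  | n + 2 => cfa α (n + 1) * cfq α (n + 1) + cfq α n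

/-- Numerators `p_n` of the continued fraction convergents of `α`:
`p₀ = ⌊α⌋`, `p₁ = a₁⌊α⌋ + 1`, `p_{n+2} = a_{n+2} p_{n+1} + p_n`. -/
noncomputable def cfp (α : ℝ) : ℕ → ℤ
  | 0 => ⌊α⌋
  | 1 => cfa α 0 * ⌊α⌋ + 1
  | n + 2 => cfa α (n + 1) * cfp α (n + 1) + cfp α n

/-- `z_n = q_n α - p_n`. -/
noncomputable def cfz (α : ℝ) (n : ℕ) : ℝ := (cfq α n : ℝ) * α - (cfp α n : ℝ)

/-- The arc `[c, d) (mod 1)` on the circle `ℝ/ℤ`. -/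
noncomputable def arc (c d : ℝ) : Set (AddCircle (1 : ℝ)) :=
  (fun t : ℝ => (t : AddCircle (1 : ℝ))) '' Set.Ico c d

lemma gauss_props (α : ℝ) (hα : Irrational α) :
    ∀ n, Irrational (gaussIter α n) ∧ 0 < gaussIter α n ∧ gaussIter α n < 1 := by
  have key : ∀ y : ℝ, Irrational y →
      Irrational (Int.fract y) ∧ 0 < Int.fract y ∧ Int.fract y < 1 := by
    intro y hy
    have h1 : Irrational (Int.fract y) := by
      have h2 := hy.sub_intCast ⌊y⌋
      rw [show Int.fract y = y - (⌊y⌋ : ℝ) from rfl]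
      exact_mod_cast h2
    refine ⟨h1, ?_, Int.fract_lt_one y⟩
    rcases lt_or_eq_of_le (Int.fract_nonneg y) with h | h
    · exact h
    · exfalso
      rw [← h] at h1
      exact h1 ⟨0, by norm_num⟩
  intro n
  induction n with
  | zero => exact key α hα
  | succ m ih => exact key _ ih.1.inv

lemma cfa_pos (α : ℝ) (hα : Irrational α) (n : ℕ) : 1 ≤ cfa α n := by
  obtain ⟨_, h0, h1⟩ := gauss_props α hα n
  have : (1 : ℝ) ≤ (gaussIter α n)⁻¹ := by
    rw [le_inv_comm₀ one_pos h0]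
    simpa using h1.le
  exact Nat.le_floor (by exact_mod_cast this)

lemma cfa_cast (α : ℝ) (hα : Irrational α) (n : ℕ) :
    (cfa α n : ℝ) = (gaussIter α n)⁻¹ - gaussIter α (n + 1) := by
  obtain ⟨_, h0, _⟩ := gauss_props α hα n
  have hinv : (0 : ℝ) ≤ (gaussIter α n)⁻¹ := by positivity
  have : ((⌊(gaussIter α n)⁻¹⌋₊ : ℤ) : ℝ) = (⌊(gaussIter α n)⁻¹⌋ : ℝ) := by
    exact_mod_cast congrArg (fun z : ℤ => (z : ℝ)) (Int.natCast_floor_eq_floor hinv)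
  show ((⌊(gaussIter α n)⁻¹⌋₊ : ℕ) : ℝ) = _
  rw [show gaussIter α (n + 1) = Int.fract (gaussIter α n)⁻¹ from rfl, Int.fract]
  push_cast at this ⊢
  linarith

lemma cfq_pos (α : ℝ) (hα : Irrational α) : ∀ n, 1 ≤ cfq α n := by
  intro n
  induction n using Nat.twoStepInduction with
  | zero => exact le_refl 1
  | one => exact cfa_pos α hα 0
  | more m ih1 ih2 =>
    show 1 ≤ cfa α (m + 1) * cfq α (m + 1) + cfq α m
    have := cfa_pos α hα (m + 1)
    nlinarith

lemma cfq_le (α : ℝ) (hα : Irrational α) (n : ℕ) : cfq α n ≤ cfq α (n + 1) := by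
  cases n with
  | zero => simpa [cfq] using cfa_pos α hα 0
  | succ m =>
    show cfq α (m + 1) ≤ cfa α (m + 1) * cfq α (m + 1) + cfq α m
    have := cfa_pos α hα (m + 1)
    nlinarith

lemma cfz_rec (α : ℝ) (n : ℕ) :
    cfz α (n + 2) = (cfa α (n + 1) : ℝ) * cfz α (n + 1) + cfz α n := by
  show (cfq α (n+2) : ℝ) * α - (cfp α (n+2) : ℝ) = _
  rw [show cfq α (n+2) = cfa α (n + 1) * cfq α (n + 1) + cfq α n from rfl,
    show cfp α (n+2) = cfa α (n + 1) * cfp α (n + 1) + cfp α n from rfl]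
  simp only [cfz]
  push_cast
  ring

lemma cfz_zero (α : ℝ) : cfz α 0 = gaussIter α 0 := by
  show (cfq α 0 : ℝ) * α - (cfp α 0 : ℝ) = Int.fract α
  rw [show cfq α 0 = 1 from rfl, show cfp α 0 = ⌊α⌋ from rfl,
    show Int.fract α = α - (⌊α⌋ : ℝ) from rfl]
  push_cast
  ring

lemma cfz_succ (α : ℝ) (hα : Irrational α) :
    ∀ n, cfz α (n + 1) = -(gaussIter α (n + 1)) * cfz α n := by
  intro n
  induction n with
  | zero =>
    have h := cfa_cast α hα 0
    obtain ⟨_, h0, _⟩ := gauss_props α hα 0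
    have hx : gaussIter α 0 ≠ 0 := ne_of_gt h0
    show cfz α 1 = -(gaussIter α 1) * cfz α 0
    rw [cfz_zero]
    show (cfq α 1 : ℝ) * α - (cfp α 1 : ℝ) = _
    rw [show cfq α 1 = cfa α 0 from rfl, show cfp α 1 = (cfa α 0 : ℤ) * ⌊α⌋ + 1 from rfl]
    push_cast
    rw [show (cfa α 0 : ℝ) = (gaussIter α 0)⁻¹ - gaussIter α 1 from h]
    have hfr : α - (⌊α⌋ : ℝ) = gaussIter α 0 := rfl
    have hinv : (gaussIter α 0)⁻¹ * gaussIter α 0 = 1 := inv_mul_cancel₀ hx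
    linear_combination ((gaussIter α 0)⁻¹ - gaussIter α 1) * hfr + hinv
  | succ m ih =>
    have h := cfa_cast α hα (m + 1)
    obtain ⟨_, h0, _⟩ := gauss_props α hα (m + 1)
    have hx : gaussIter α (m + 1) ≠ 0 := ne_of_gt h0
    rw [cfz_rec, ih, h]
    field_simp
    ring

lemma cfz_ne (α : ℝ) (hα : Irrational α) (n : ℕ) : cfz α n ≠ 0 := by
  induction n with
  | zero =>
    rw [cfz_zero]
    exact ne_of_gt (gauss_props α hα 0).2.1
  | succ m ih =>
    rw [cfz_succ α hα m]
    exact mul_ne_zero (neg_ne_zero.2 (ne_of_gt (gauss_props α hα (m+1)).2.1)) ih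

lemma fract_shift (w r : ℝ) (m : ℤ) (hr : 0 ≤ r) (hrw : r ≤ Int.fract w) :
    Int.fract (w - (r + m)) = Int.fract w - r := by
  have h1 : w - (r + m) = (w - r) - m := by ring
  rw [h1, Int.fract_sub_intCast, Int.fract_eq_iff]
  refine ⟨by linarith, by have := Int.fract_lt_one w; linarith, ⟨⌊w⌋, ?_⟩⟩
  have := Int.self_sub_fract w
  linarith

lemma key_lemma (α : ℝ) (hα : Irrational α) (n : ℕ) (s : ℝ) :
    ∃ j : ℕ, j < cfq α (n + 1) ∧
      Int.fract (s + (j : ℝ) * α) < |cfz α n| + |cfz α (n + 1)| := by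
  by_contra hcon
  push_neg at hcon
  set Q := cfq α (n + 1) with hQdef
  set q := cfq α n with hqdef
  set c := |cfz α n| + |cfz α (n + 1)| with hcdef
  have hQ1 : 1 ≤ Q := cfq_pos α hα (n + 1)
  have hqQ : q ≤ Q := cfq_le α hα n
  have hzn : cfz α n ≠ 0 := cfz_ne α hα n
  have hzn1 : cfz α (n + 1) ≠ 0 := cfz_ne α hα (n + 1)
  have habs1 : 0 < |cfz α n| := abs_pos.2 hzn
  have habs2 : 0 < |cfz α (n + 1)| := abs_pos.2 hzn1
  have hopp : cfz α (n + 1) = -(gaussIter α (n + 1)) * cfz α n := cfz_succ α hα n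
  have hx1 : 0 < gaussIter α (n + 1) := (gauss_props α hα (n + 1)).2.1
  obtain ⟨j₀, hj₀mem, hmin⟩ := Finset.exists_min_image (Finset.range Q)
    (fun j => Int.fract (s + (j : ℝ) * α)) ⟨0, Finset.mem_range.2 hQ1⟩
  rw [Finset.mem_range] at hj₀mem
  set v := Int.fract (s + (j₀ : ℝ) * α) with hv
  have hvc : c ≤ v := hcon j₀ hj₀mem
  have hqα : (q : ℝ) * α = cfz α n + (cfp α n : ℝ) := by
    rw [hqdef, cfz]; ring
  have hQα : (Q : ℝ) * α = cfz α (n + 1) + (cfp α (n + 1) : ℝ) := by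
    rw [hQdef, cfz]; ring
  rcases hzn.lt_or_gt with hneg | hpos
  · -- cfz α n < 0, so cfz α (n+1) > 0
    have hpos1 : 0 < cfz α (n + 1) := by nlinarith
    have habsn : |cfz α n| = -cfz α n := abs_of_neg hneg
    have habsn1 : |cfz α (n + 1)| = cfz α (n + 1) := abs_of_pos hpos1
    by_cases hcase : j₀ + q < Q
    · -- move to j₀ + q, fract decreases by |z_n|
      have e : s + ((j₀ + q : ℕ) : ℝ) * α
          = (s + (j₀ : ℝ) * α) - ((-cfz α n) + (-(cfp α n) : ℤ)) := by
        push_cast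
        linear_combination hqα
      have hf : Int.fract (s + ((j₀ + q : ℕ) : ℝ) * α) = v - (-cfz α n) := by
        rw [e]
        exact fract_shift _ _ _ (by linarith) (by rw [← hv]; linarith)
      have := hmin (j₀ + q) (Finset.mem_range.2 hcase)
      simp only [hf] at this
      linarith
    · -- j₀ ≥ Q - q : move to j₀ - (Q - q), fract decreases by c
      push_neg at hcase
      have hle : Q - q ≤ j₀ := by omega
      have hlt : j₀ - (Q - q) < Q := by omega
      have e : s + ((j₀ - (Q - q) : ℕ) : ℝ) * α
          = (s + (j₀ : ℝ) * α) - ((cfz α (n+1) - cfz α n) + ((cfp α (n+1)) - cfp α n : ℤ)) := by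
        rw [Nat.cast_sub hle, Nat.cast_sub hqQ]
        push_cast
        linear_combination hqα - hQα
      have hf : Int.fract (s + ((j₀ - (Q - q) : ℕ) : ℝ) * α)
          = v - (cfz α (n+1) - cfz α n) := by
        rw [e]
        refine fract_shift _ _ _ (by linarith) (by rw [← hv]; rw [hcdef, habsn, habsn1] at hvc; linarith)
      have := hmin (j₀ - (Q - q)) (Finset.mem_range.2 hlt)
      simp only [hf] at this
      rw [hcdef, habsn, habsn1] at hvc
      linarith
  · -- cfz α n > 0, so cfz α (n+1) < 0
    have hneg1 : cfz α (n + 1) < 0 := by nlinarith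
    have habsn : |cfz α n| = cfz α n := abs_of_pos hpos
    have habsn1 : |cfz α (n + 1)| = -cfz α (n + 1) := abs_of_neg hneg1
    by_cases hcase : q ≤ j₀
    · -- move to j₀ - q, fract decreases by z_n
      have hlt : j₀ - q < Q := by omega
      have e : s + ((j₀ - q : ℕ) : ℝ) * α
          = (s + (j₀ : ℝ) * α) - (cfz α n + (cfp α n : ℤ)) := by
        rw [Nat.cast_sub hcase]
        push_cast
        linear_combination -hqα
      have hf : Int.fract (s + ((j₀ - q : ℕ) : ℝ) * α) = v - cfz α n := by
        rw [e]
        refine fract_shift _ _ _ (by linarith) (by rw [← hv]; rw [hcdef, habsn, habsn1] at hvc; linarith)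
      have := hmin (j₀ - q) (Finset.mem_range.2 hlt)
      simp only [hf] at this
      linarith
    · -- j₀ < q : move to j₀ + (Q - q), fract decreases by c
      push_neg at hcase
      have hlt : j₀ + (Q - q) < Q := by omega
      have e : s + ((j₀ + (Q - q) : ℕ) : ℝ) * α
          = (s + (j₀ : ℝ) * α) - ((cfz α n - cfz α (n+1)) + ((cfp α n) - cfp α (n+1) : ℤ)) := by
        rw [Nat.cast_add, Nat.cast_sub hqQ]
        push_cast
        linear_combination hQα - hqα
      have hf : Int.fract (s + ((j₀ + (Q - q) : ℕ) : ℝ) * α)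
          = v - (cfz α n - cfz α (n+1)) := by
        rw [e]
        refine fract_shift _ _ _ (by linarith) (by rw [← hv]; rw [hcdef, habsn, habsn1] at hvc; linarith)
      have := hmin (j₀ + (Q - q)) (Finset.mem_range.2 hlt)
      simp only [hf] at this
      rw [hcdef, habsn, habsn1] at hvc
      linarith

/-- Any orbit of the rotation by `α` enters the arc `I = [-b_n, b_n)` (where
`b_n = (|z_n| + |z_{n+1}|)/2`) in time less than `q_{n+1}`. -/
theorem statement11 (α : ℝ) (hα : Irrational α) (n : ℕ) (x : AddCircle (1 : ℝ)) :
    ∃ j : ℕ, j < cfq α (n + 1) ∧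
      x + (((j : ℝ) * α : ℝ) : AddCircle (1 : ℝ)) ∈
        arc (-((|cfz α n| + |cfz α (n + 1)|) / 2)) ((|cfz α n| + |cfz α (n + 1)|) / 2) := by
  obtain ⟨t, rfl⟩ := QuotientAddGroup.mk_surjective x
  set c := |cfz α n| + |cfz α (n + 1)| with hcdef
  obtain ⟨j, hj, hfr⟩ := key_lemma α hα n (t + c / 2)
  refine ⟨j, hj, ?_⟩
  set w := t + (j : ℝ) * α with hw
  have harg : t + c / 2 + (j : ℝ) * α = w + c / 2 := by rw [hw]; ring
  rw [harg] at hfr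
  have hge : 0 ≤ Int.fract (w + c / 2) := Int.fract_nonneg _
  refine ⟨Int.fract (w + c / 2) - c / 2, ⟨by linarith, by linarith⟩, ?_⟩
  have heq : Int.fract (w + c / 2) - c / 2 = w - (⌊w + c / 2⌋ : ℝ) := by
    rw [Int.fract]; ring
  rw [heq]
  have hz : (((⌊w + c / 2⌋ : ℝ)) : AddCircle (1 : ℝ)) = 0 :=
    (AddCircle.coe_eq_zero_iff _).2 ⟨⌊w + c / 2⌋, by simp⟩
  calc ((w - (⌊w + c / 2⌋ : ℝ) : ℝ) : AddCircle (1 : ℝ))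
      = ((w : ℝ) : AddCircle (1 : ℝ)) - (((⌊w + c / 2⌋ : ℝ)) : AddCircle (1 : ℝ)) :=
        AddCircle.coe_sub _ _ _
    _ = ((w : ℝ) : AddCircle (1 : ℝ)) := by rw [hz, sub_zero]
    _ = ((t : ℝ) : AddCircle (1 : ℝ)) + (((j : ℝ) * α : ℝ) : AddCircle (1 : ℝ)) := by
        rw [hw]; exact AddCircle.coe_add _ _ _
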